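/- Let x₁, …, x_N be as in the periodic setting, with L ∈ C²(ℝ; ℝ) and G ∈ C¹((0, ∞); ℝ), solving the Euler–Lagrange system with zero potential gradient. Then the total discrete energy t ↦ Σ_{i=1}^{N} [ L'(ẋᵢ(t)) ẋᵢ(t) − L(ẋᵢ(t)) − G(Rᵢ(t)) ] is constant on [0, T]; equivalently, the semi-discrete quantity Σ_{i=1}^{N} E^i(uᵢ, Rᵢ)(xᵢ − x_{i−1}) with E^i(u, R) = (L'(u) u − L(u) − G(R)) R and uᵢ = ẋᵢ is conserved in time. -/

import Mathlib

open Set Finset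

/-- Discrete density `Rᵢ(t) = δ/(xᵢ(t) − x_{i−1}(t))`, `δ = 1/N`, periodic indexing by `ℤ`. -/
noncomputable def Rd (N : ℕ) (x : ℤ → ℝ → ℝ) (i : ℤ) (t : ℝ) : ℝ :=
  ((1 : ℝ) / N) / (x i t - x (i - 1) t)

/-- Telescoping sum over `Finset.Icc 1 b` in `ℤ`. -/
lemma telescope_Icc (f : ℤ → ℝ) : ∀ b : ℤ, 1 ≤ b →
    ∑ i ∈ Finset.Icc (1:ℤ) b, (f (i+1) - f i) = f (b+1) - f 1 := by
  refine Int.le_induction ?_ ?_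
  · simp
  · intro n hn ih
    have hins : Finset.Icc (1:ℤ) (n+1) = insert (n+1) (Finset.Icc 1 n) := by
      ext k; simp [Finset.mem_Icc]; omega
    rw [hins, Finset.sum_insert (by simp [Finset.mem_Icc]), ih]
    ring

/-- Conservation of the total discrete energy
`Σᵢ [L'(ẋᵢ(t)) ẋᵢ(t) − L(ẋᵢ(t)) − G(Rᵢ(t))]` along solutions of the periodic
Euler–Lagrange system with zero potential gradient. -/
theorem stmt_11
    (N : ℕ) (hN : 2 ≤ N) (T : ℝ) (hT : 0 < T)
    (x : ℤ → ℝ → ℝ)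
    (hper : ∀ i t, x (i + N) t = x i t + 1)
    (hx : ∀ i, ContDiff ℝ 2 (x i))
    (hord : ∀ i, ∀ t ∈ Icc (0:ℝ) T, x i t < x (i + 1) t)
    (L : ℝ → ℝ) (hL : ContDiff ℝ 2 L)
    (G : ℝ → ℝ) (hG : ContDiffOn ℝ 1 G (Ioi 0))
    (hEL : ∀ i, ∀ t ∈ Icc (0:ℝ) T,
      deriv (deriv L) (deriv (x i) t) * deriv (deriv (x i)) t =
        N * (deriv G (Rd N x (i + 1) t) * (Rd N x (i + 1) t) ^ 2
          - deriv G (Rd N x i t) * (Rd N x i t) ^ 2)) :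
    ∀ t ∈ Icc (0:ℝ) T,
      ∑ i ∈ Finset.Icc (1:ℤ) (N:ℤ),
          (deriv L (deriv (x i) t) * deriv (x i) t - L (deriv (x i) t) - G (Rd N x i t)) =
        ∑ i ∈ Finset.Icc (1:ℤ) (N:ℤ),
          (deriv L (deriv (x i) 0) * deriv (x i) 0 - L (deriv (x i) 0) - G (Rd N x i 0)) := by
  have hN0 : (N:ℝ) ≠ 0 := by positivity
  have hNpos : (0:ℝ) < N := by positivity
  -- basic differentiability facts
  have hxd : ∀ i t, HasDerivAt (x i) (deriv (x i) t) t := fun i t =>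
    (((hx i).differentiable (by norm_num)) t).hasDerivAt
  have hxdd : ∀ i, Differentiable ℝ (deriv (x i)) := by
    intro i
    have h2 : ContDiff ℝ ((1:ℕ)+1) (x i) := by exact_mod_cast hx i
    exact (contDiff_succ_iff_deriv.mp h2).2.2.differentiable (by norm_num)
  have hL1 : Differentiable ℝ L := hL.differentiable (by norm_num)
  have hL2 : Differentiable ℝ (deriv L) := by
    have h2 : ContDiff ℝ ((1:ℕ)+1) L := by exact_mod_cast hL
    exact (contDiff_succ_iff_deriv.mp h2).2.2.differentiable (by norm_num)
  -- ordering/positivity at times in [0,T]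
  have hwpos : ∀ i, ∀ t ∈ Icc (0:ℝ) T, 0 < x i t - x (i-1) t := by
    intro i t ht
    have := hord (i-1) t ht
    rw [sub_add_cancel] at this
    linarith
  have hRpos : ∀ i, ∀ t ∈ Icc (0:ℝ) T, 0 < Rd N x i t := by
    intro i t ht
    exact div_pos (by positivity) (hwpos i t ht)
  -- derivative of Rd
  have hRd : ∀ i, ∀ t ∈ Icc (0:ℝ) T,
      HasDerivAt (fun s => Rd N x i s)
        ((0 * (x i t - x (i-1) t) - (1/(N:ℝ)) * (deriv (x i) t - deriv (x (i-1)) t))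
          / (x i t - x (i-1) t)^2) t := by
    intro i t ht
    have := (hasDerivAt_const t ((1:ℝ)/N)).fun_div ((hxd i t).fun_sub (hxd (i-1) t))
      (hwpos i t ht).ne'
    simpa [Rd] using this
  -- derivative of G at Rd values
  have hGd : ∀ i, ∀ t ∈ Icc (0:ℝ) T, HasDerivAt G (deriv G (Rd N x i t)) (Rd N x i t) := by
    intro i t ht
    exact ((hG.differentiableOn (by norm_num)).differentiableAt
      (isOpen_Ioi.mem_nhds (hRpos i t ht))).hasDerivAt
  -- the "flux" function
  set hh : ℤ → ℝ → ℝ := fun j t =>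
    (N:ℝ) * (deriv G (Rd N x j t) * (Rd N x j t)^2) * deriv (x (j-1)) t with hhdef
  -- derivative of each summand
  have hterm : ∀ i, ∀ t ∈ Icc (0:ℝ) T,
      HasDerivAt (fun s => deriv L (deriv (x i) s) * deriv (x i) s - L (deriv (x i) s)
          - G (Rd N x i s)) (hh (i+1) t - hh i t) t := by
    intro i t ht
    have du : HasDerivAt (deriv (x i)) (deriv (deriv (x i)) t) t := (hxdd i t).hasDerivAt
    have d1 : HasDerivAt (fun s => deriv L (deriv (x i) s))
        (deriv (deriv L) (deriv (x i) t) * deriv (deriv (x i)) t) t :=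
      ((hL2 (deriv (x i) t)).hasDerivAt).comp t du
    have d2 : HasDerivAt (fun s => L (deriv (x i) s))
        (deriv L (deriv (x i) t) * deriv (deriv (x i)) t) t :=
      ((hL1 (deriv (x i) t)).hasDerivAt).comp t du
    have d3 : HasDerivAt (fun s => G (Rd N x i s))
        (deriv G (Rd N x i t) *
          ((0 * (x i t - x (i-1) t) - (1/(N:ℝ)) * (deriv (x i) t - deriv (x (i-1)) t))
            / (x i t - x (i-1) t)^2)) t :=
      (hGd i t ht).comp t (hRd i t ht)
    have dF := ((d1.fun_mul du).fun_sub d2).fun_sub d3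
    refine dF.congr_deriv ?_
    symm
    -- algebra: show hh (i+1) t - hh i t equals the computed derivative
    rw [hEL i t ht]
    have hid : (i + 1 - 1 : ℤ) = i := by ring
    have hrdi : Rd N x i t = (1/(N:ℝ)) / (x i t - x (i-1) t) := rfl
    rw [hhdef]
    simp only [hid]
    rw [hrdi]
    have hw : x i t - x (i-1) t ≠ 0 := (hwpos i t ht).ne'
    field_simp
    ring
  -- total energy and its derivative
  set E : ℝ → ℝ := fun t => ∑ i ∈ Finset.Icc (1:ℤ) (N:ℤ),
      (deriv L (deriv (x i) t) * deriv (x i) t - L (deriv (x i) t) - G (Rd N x i t))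
    with hEdef
  have hEderiv : ∀ t ∈ Icc (0:ℝ) T, HasDerivAt E 0 t := by
    intro t ht
    have hsum : HasDerivAt E (∑ i ∈ Finset.Icc (1:ℤ) (N:ℤ), (hh (i+1) t - hh i t)) t :=
      HasDerivAt.fun_sum (fun i _ => hterm i t ht)
    have hz : ∑ i ∈ Finset.Icc (1:ℤ) (N:ℤ), (hh (i+1) t - hh i t) = 0 := by
      rw [telescope_Icc (fun j => hh j t) (N:ℤ) (by exact_mod_cast Nat.one_le_of_lt hN)]
      -- hh (N+1) t = hh 1 t by periodicity
      have hxper : ∀ s, x ((N:ℤ)+1) s = x 1 s + 1 := by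
        intro s
        have := hper 1 s
        rwa [add_comm 1 (N:ℤ)] at this
      have hxper0 : ∀ s, x (N:ℤ) s = x 0 s + 1 := by
        intro s
        have := hper 0 s
        rwa [zero_add] at this
      have hRper : Rd N x ((N:ℤ)+1) t = Rd N x 1 t := by
        simp only [Rd, add_sub_cancel_right]
        rw [hxper, hxper0]
        norm_num
      have huper : deriv (x ((N:ℤ)+1-1)) t = deriv (x (1-1 : ℤ)) t := by
        have : x ((N:ℤ)+1-1) = fun s => x (1-1 : ℤ) s + 1 := by
          funext s
          have h := hper (0:ℤ) s
          rw [zero_add] at h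
          simp only [add_sub_cancel_right, sub_self]
          exact h
        rw [this]
        simp
      rw [hhdef]
      simp only [hRper, huper]
      ring
    rwa [hz] at hsum
  -- constancy on [0,T]
  have hconst : ∀ t ∈ Icc (0:ℝ) T, E t = E 0 :=
    constant_of_has_deriv_right_zero
      (fun s hs => (hEderiv s hs).continuousAt.continuousWithinAt)
      (fun s hs => (hEderiv s (Ico_subset_Icc_self hs)).hasDerivWithinAt)
  intro t ht
  exact hconst t ht
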